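/- Let P be the centrally orthocomplete projection OML of a synaptic algebra A, and let 𝒬 be an OML type class (closed under: central intervals, arbitrary cartesian products, and OML isomorphism). Then Q := {q ∈ P : P[0,q] ∈ 𝒬} is a projective TD subset of P. If moreover 𝒬 is closed under all intervals L[0,p] (a strong OML type class), then Q is STD (downward closed and closed under suprema of centrally orthogonal families). -/

import Mathlib

universe u

/-- A (partial axiomatization of a) synaptic algebra: a partially ordered real
vector subspace `A` of an associative unital algebra `R`, closed under squaring
and quadratic maps, in which the projections form an orthomodular lattice with
`p⊥ = 1 - p` and, for projections, `p ≤ q ↔ p * q = p ↔ q * p = p`. -/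
structure Synaptic (R : Type u) [Ring R] [PartialOrder R] where
  A : Set R
  one_mem : (1 : R) ∈ A
  add_mem : ∀ {a b : R}, a ∈ A → b ∈ A → a + b ∈ A
  neg_mem : ∀ {a : R}, a ∈ A → -a ∈ A
  sq_mem : ∀ {a : R}, a ∈ A → a * a ∈ A
  quad_mem : ∀ {a b : R}, a ∈ A → b ∈ A → a * b * a ∈ A
  add_le_add_right : ∀ {a b : R}, a ≤ b → ∀ c : R, a + c ≤ b + c
  sq_nonneg' : ∀ {a : R}, a ∈ A → 0 ≤ a * a
  quad_nonneg : ∀ {a b : R}, a ∈ A → b ∈ A → 0 ≤ b → 0 ≤ a * b * a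
  zero_lt_one' : (0 : R) < 1
  /-- for projections, the order is characterized multiplicatively -/
  proj_le_iff : ∀ {p q : R}, p ∈ A → p * p = p → q ∈ A → q * q = q →
    (p ≤ q ↔ p * q = p ∧ q * p = p)

namespace Synaptic

variable {R : Type u} [Ring R] [PartialOrder R] (S : Synaptic R)

/-- `p` is a projection of `A`. -/
def IsProj (p : R) : Prop := p ∈ S.A ∧ p * p = p

/-- `s` is a symmetry of `A`. -/
def IsSym (s : R) : Prop := s ∈ S.A ∧ s * s = 1

/-- `c` belongs to the center `C(A)` of `A`. -/
def Central (c : R) : Prop := c ∈ S.A ∧ ∀ a ∈ S.A, c * a = a * c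

/-- `c` is a central projection. -/
def IsCentralProj (c : R) : Prop := S.IsProj c ∧ S.Central c

/-- Equivalence of projections: `p ∼ q` iff there is a finite chain of
projections from `p` to `q` in which consecutive members are exchanged by a
symmetry of `A`. -/
def Equiv (p q : R) : Prop :=
  ∃ n : ℕ, ∃ e : ℕ → R, e 0 = p ∧ e n = q ∧ (∀ i ≤ n, S.IsProj (e i)) ∧
    ∀ i < n, ∃ s : R, S.IsSym s ∧ s * e i * s = e (i + 1)

/-- `p ⪯ q`: `p` is equivalent to a subprojection of `q`. -/
def SubEquiv (p q : R) : Prop := ∃ q₁ : R, S.IsProj q₁ ∧ q₁ ≤ q ∧ S.Equiv p q₁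

/-- `p` is the supremum, in the projection lattice `P`, of the set `F` of
projections. -/
def IsSupProj (F : Set R) (p : R) : Prop :=
  S.IsProj p ∧ (∀ q ∈ F, q ≤ p) ∧ ∀ r : R, S.IsProj r → (∀ q ∈ F, q ≤ r) → p ≤ r

/-- `p` is the infimum, in the projection lattice `P`, of the set `F` of
projections. -/
def IsInfProj (F : Set R) (p : R) : Prop :=
  S.IsProj p ∧ (∀ q ∈ F, p ≤ q) ∧ ∀ r : R, S.IsProj r → (∀ q ∈ F, r ≤ q) → r ≤ p

/-- `F` is a (pairwise) orthogonal set of projections. -/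
def OrthSet (F : Set R) : Prop :=
  (∀ p ∈ F, S.IsProj p) ∧ ∀ p ∈ F, ∀ q ∈ F, p ≠ q → p * q = 0

/-- `F` is a centrally orthogonal set of projections: its members are dominated
by a pairwise orthogonal family of central projections. -/
def CentOrthSet (F : Set R) : Prop :=
  (∀ p ∈ F, S.IsProj p) ∧ ∃ c : R → R,
    (∀ p ∈ F, S.IsCentralProj (c p) ∧ p ≤ c p) ∧
    ∀ p ∈ F, ∀ q ∈ F, p ≠ q → c p * c q = 0

/-- The projection lattice `P` is centrally orthocomplete. -/
def CentOrthocomplete : Prop :=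
  ∀ F : Set R, S.CentOrthSet F → ∃ p : R, S.IsSupProj F p

/-- The projection lattice `P` is complete. -/
def CompleteP : Prop :=
  ∀ F : Set R, (∀ p ∈ F, S.IsProj p) → ∃ p : R, S.IsSupProj F p

/-- `c` is the central cover `γ a` of `a`: the smallest central projection `c`
with `a * c = a`. -/
def IsCentralCover (a c : R) : Prop :=
  S.IsCentralProj c ∧ a * c = a ∧
    ∀ d : R, S.IsCentralProj d → a * d = a → c ≤ d

/-- `Q` is a type-determining (TD) set of projections: closed under suprema of
centrally orthogonal families and under meets (= products) with central
projections. -/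
def TD (Q : Set R) : Prop :=
  (∀ q ∈ Q, S.IsProj q) ∧
  (∀ F : Set R, F ⊆ Q → S.CentOrthSet F → ∀ p : R, S.IsSupProj F p → p ∈ Q) ∧
  (∀ q ∈ Q, ∀ c : R, S.IsCentralProj c → q * c ∈ Q)

/-- `Q` is projective: closed under equivalence of projections. -/
def Projective (Q : Set R) : Prop :=
  ∀ p q : R, q ∈ Q → S.Equiv p q → p ∈ Q

/-- `Q` is downward closed (`Q↓ ⊆ Q`). -/
def DownwardClosed (Q : Set R) : Prop :=
  ∀ q ∈ Q, ∀ p : R, S.IsProj p → p ≤ q → p ∈ Q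

/-- The projection `p` is modular: the interval OML `P[0,p]` satisfies the
modular law (stated relationally via suprema and infima in `P`, which agree
with those computed in `P[0,p]`). -/
def ModularProj (p : R) : Prop :=
  S.IsProj p ∧ ∀ a b c : R, S.IsProj a → S.IsProj b → S.IsProj c →
    a ≤ p → b ≤ p → c ≤ p → a ≤ c →
    ∀ i s j m : R, S.IsInfProj {b, c} i → S.IsSupProj {a, i} s →
      S.IsSupProj {a, b} j → S.IsInfProj {j, c} m → s = m

/-- `p` and `q` are perspective in the interval `P[0,r]`: they have a common
complement `x` there. -/
def PerspectiveIn (r p q : R) : Prop :=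
  ∃ x : R, S.IsProj x ∧ x ≤ r ∧ S.IsSupProj {p, x} r ∧ S.IsSupProj {q, x} r ∧
    S.IsInfProj {p, x} 0 ∧ S.IsInfProj {q, x} 0

end Synaptic

/-- A bundled orthomodular lattice, with all structure stated relationally. -/
structure BOML : Type (u + 1) where
  α : Type u
  le : α → α → Prop
  compl : α → α
  le_refl : ∀ a, le a a
  le_trans : ∀ a b c, le a b → le b c → le a c
  le_antisymm : ∀ a b, le a b → le b a → a = b
  exists_bot : ∃ b, ∀ a, le b a
  exists_top : ∃ t, ∀ a, le a t
  exists_sup : ∀ a b, ∃ s, le a s ∧ le b s ∧ ∀ u, le a u → le b u → le s u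
  exists_inf : ∀ a b, ∃ i, le i a ∧ le i b ∧ ∀ v, le v a → le v b → le v i
  compl_compl : ∀ a, compl (compl a) = a
  compl_antitone : ∀ a b, le a b → le (compl b) (compl a)
  sup_compl_top : ∀ a u, le a u → le (compl a) u → ∀ x, le x u
  inf_compl_bot : ∀ a v, le v a → le v (compl a) → ∀ x, le v x
  orthomodular : ∀ a b i s, le a b →
    (le i b ∧ le i (compl a) ∧ ∀ v, le v b → le v (compl a) → le v i) →
    (le a s ∧ le i s ∧ ∀ u, le a u → le i u → le s u) → s = b

namespace BOML

/-- `m` is the infimum of `x` and `y` in `L`. -/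
def RelInf (L : BOML) (x y m : L.α) : Prop :=
  L.le m x ∧ L.le m y ∧ ∀ v, L.le v x → L.le v y → L.le v m

/-- `s` is the supremum of `x` and `y` in `L`. -/
def RelSup (L : BOML) (x y s : L.α) : Prop :=
  L.le x s ∧ L.le y s ∧ ∀ u, L.le x u → L.le y u → L.le s u

/-- `c` is central in `L`: every `x` satisfies `x = (x ⊓ c) ⊔ (x ⊓ cᶜ)`. -/
def IsCentralEl (L : BOML) (c : L.α) : Prop :=
  ∀ x : L.α, ∃ i₁ i₂ : L.α,
    L.RelInf x c i₁ ∧ L.RelInf x (L.compl c) i₂ ∧ L.RelSup i₁ i₂ x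

/-- `L'` is (isomorphic to) the interval `L[0,c]`, with the relative
orthocomplementation `x ↦ c ⊓ xᶜ`. -/
def IsIntervalOf (L' L : BOML) (c : L.α) : Prop :=
  ∃ e : L'.α ≃ { x : L.α // L.le x c },
    (∀ a b : L'.α, L'.le a b ↔ L.le (e a) (e b)) ∧
    (∀ a : L'.α, L.RelInf c (L.compl (e a)) (e (L'.compl a)))

/-- `L` is (isomorphic to) the cartesian product of the family `f`, with
coordinatewise operations and relations. -/
def IsProductOf (L : BOML) {ι : Type u} (f : ι → BOML) : Prop :=
  ∃ e : L.α ≃ ∀ i, (f i).α,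
    (∀ a b : L.α, L.le a b ↔ ∀ i, (f i).le (e a i) (e b i)) ∧
    (∀ (a : L.α) (i : ι), e (L.compl a) i = (f i).compl (e a i))

/-- `L` and `L'` are isomorphic OMLs. -/
def IsoOf (L L' : BOML) : Prop :=
  ∃ e : L.α ≃ L'.α,
    (∀ a b : L.α, L.le a b ↔ L'.le (e a) (e b)) ∧
    (∀ a : L.α, e (L.compl a) = L'.compl (e a))

end BOML

/-- `L` represents the interval `P[0,q]` of the projection lattice of the
synaptic algebra `S`, with orthocomplementation `x ↦ q ∧ x⊥ = q - x`. -/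
def Synaptic.RepresentsInterval {R : Type u} [Ring R] [PartialOrder R]
    (S : Synaptic R) (L : BOML.{u}) (q : R) : Prop :=
  ∃ e : L.α ≃ { x : R // S.IsProj x ∧ x ≤ q },
    (∀ a b : L.α, L.le a b ↔ ((e a : R) ≤ (e b : R))) ∧
    (∀ a : L.α, ((e (L.compl a)) : R) = q - ((e a) : R))

section Aux

namespace Synaptic

variable {R : Type u} [Ring R] [PartialOrder R] {S : Synaptic R}

lemma zero_mem : (0 : R) ∈ S.A := by
  simpa using S.add_mem S.one_mem (S.neg_mem S.one_mem)

lemma isProj_zero : S.IsProj 0 := ⟨zero_mem, by simp⟩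

lemma sub_mem {a b : R} (ha : a ∈ S.A) (hb : b ∈ S.A) : a - b ∈ S.A := by
  simpa [sub_eq_add_neg] using S.add_mem ha (S.neg_mem hb)

lemma le_mul {p q : R} (hp : S.IsProj p) (hq : S.IsProj q) (h : p ≤ q) :
    p * q = p ∧ q * p = p := (S.proj_le_iff hp.1 hp.2 hq.1 hq.2).1 h

lemma mul_le {p q : R} (hp : S.IsProj p) (hq : S.IsProj q)
    (h1 : p * q = p) (h2 : q * p = p) : p ≤ q :=
  (S.proj_le_iff hp.1 hp.2 hq.1 hq.2).2 ⟨h1, h2⟩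

lemma comm_central {c a : R} (hc : S.IsCentralProj c) (ha : a ∈ S.A) :
    c * a = a * c := hc.2.2 a ha

/-- `(a*c)*(b*c) = (a*b)*c` when `c` is a commuting idempotent for `b`. -/
lemma slice_mul {a b c : R} (hcb : c * b = b * c) (hcc : c * c = c) :
    a * c * (b * c) = a * b * c := by
  rw [mul_assoc, ← mul_assoc c b c, hcb, mul_assoc b c c, hcc, ← mul_assoc]

lemma isProj_mulc {p c : R} (hp : S.IsProj p) (hc : S.IsCentralProj c) :
    S.IsProj (p * c) := by
  have hcp := comm_central hc hp.1
  constructor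
  · have h1 : p * c * p ∈ S.A := S.quad_mem hp.1 hc.1.1
    have h2 : p * c * p = p * c := by
      rw [mul_assoc, hcp, ← mul_assoc, hp.2]
    rwa [h2] at h1
  · rw [slice_mul hcp hc.1.2, hp.2]

lemma mulc_le_left {p c : R} (hp : S.IsProj p) (hc : S.IsCentralProj c) :
    p * c ≤ p := by
  have hcp := comm_central hc hp.1
  refine mul_le (isProj_mulc hp hc) hp ?_ ?_
  · rw [mul_assoc, hcp, ← mul_assoc, hp.2]
  · rw [← mul_assoc, hp.2]

lemma mulc_le_central {p c : R} (hp : S.IsProj p) (hc : S.IsCentralProj c) :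
    p * c ≤ c := by
  refine mul_le (isProj_mulc hp hc) hc.1 ?_ ?_
  · rw [mul_assoc, hc.1.2]
  · rw [← mul_assoc, comm_central hc hp.1, mul_assoc, hc.1.2]

lemma isProj_sub {p q : R} (hp : S.IsProj p) (hq : S.IsProj q) (h : p ≤ q) :
    S.IsProj (q - p) := by
  obtain ⟨h1, h2⟩ := le_mul hp hq h
  refine ⟨sub_mem hq.1 hp.1, ?_⟩
  have : (q - p) * (q - p) = q * q - q * p - (p * q - p * p) := by noncomm_ring
  rw [this, hq.2, hp.2, h1, h2]; abel

lemma sub_le_self {p q : R} (hp : S.IsProj p) (hq : S.IsProj q) (h : p ≤ q) :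
    q - p ≤ q := by
  obtain ⟨h1, h2⟩ := le_mul hp hq h
  refine mul_le (isProj_sub hp hq h) hq ?_ ?_
  · rw [sub_mul, hq.2, h1]
  · rw [mul_sub, hq.2, h2]

lemma le_mulc {p q c : R} (hp : S.IsProj p) (hq : S.IsProj q)
    (hc : S.IsCentralProj c) (h : p ≤ q) : p * c ≤ q * c := by
  obtain ⟨h1, h2⟩ := le_mul hp hq h
  have hcq := comm_central hc hq.1
  have hcp := comm_central hc hp.1
  refine mul_le (isProj_mulc hp hc) (isProj_mulc hq hc) ?_ ?_
  · rw [slice_mul hcq hc.1.2, h1]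
  · rw [slice_mul hcp hc.1.2, h2]

/-- centrally separated projections multiply to zero -/
lemma orth_of_central {p q c d : R} (hp : S.IsProj p) (hq : S.IsProj q)
    (hc : S.IsCentralProj c) (hd : S.IsCentralProj d)
    (hpc : p ≤ c) (hqd : q ≤ d) (hcd : c * d = 0) : p * q = 0 := by
  have h1 : p * c = p := (le_mul hp hc.1 hpc).1
  have h2 : d * q = q := (le_mul hq hd.1 hqd).2
  calc p * q = p * c * (d * q) := by rw [h1, h2]
    _ = p * (c * d) * q := by rw [mul_assoc, mul_assoc, mul_assoc]
    _ = 0 := by rw [hcd, mul_zero, zero_mul]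

/-- Lemma A: the central slice of a supremum of a centrally separated family
is the corresponding member. -/
lemma sup_slice {F : Set R} {s q0 c : R}
    (hs : S.IsSupProj F s) (hq0F : q0 ∈ F) (hq0 : S.IsProj q0)
    (hc : S.IsCentralProj c) (hq0c : q0 ≤ c)
    (hF : ∀ q ∈ F, S.IsProj q)
    (horth : ∀ q ∈ F, q ≠ q0 → q * c = 0) : s * c = q0 := by
  have hsp := hs.1
  have hq0s : q0 ≤ s := hs.2.1 q0 hq0F
  obtain ⟨hq0s1, hq0s2⟩ := le_mul hq0 hsp hq0s
  obtain ⟨hq0c1, hq0c2⟩ := le_mul hq0 hc.1 hq0c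
  have hcs := comm_central hc hsp.1
  have hsc : S.IsProj (s * c) := isProj_mulc hsp hc
  have hscle : s * c ≤ s := mulc_le_left hsp hc
  have hu : S.IsProj (s - s * c) := isProj_sub hsc hsp hscle
  -- orthogonality of q0 and s - s*c
  have hq0u : q0 * (s - s * c) = 0 := by
    rw [mul_sub, hq0s1, ← mul_assoc, hq0s1, hq0c1, sub_self]
  have hscq0 : s * c * q0 = q0 := by rw [mul_assoc, hq0c2, hq0s2]
  have huq0 : (s - s * c) * q0 = 0 := by
    rw [sub_mul, hq0s2, hscq0, sub_self]
  set r : R := s - s * c + q0 with hrdef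
  have hrA : r ∈ S.A := S.add_mem (sub_mem hsp.1 hsc.1) hq0.1
  have hr : S.IsProj r := by
    refine ⟨hrA, ?_⟩
    have hexp : r * r = (s - s * c) * (s - s * c) + (s - s * c) * q0
        + q0 * (s - s * c) + q0 * q0 := by rw [hrdef]; noncomm_ring
    rw [hexp, hu.2, huq0, hq0u, hq0.2, hrdef]; abel
  have hub : ∀ q ∈ F, q ≤ r := by
    intro q hqF
    have hq := hF q hqF
    by_cases he : q = q0
    · subst he
      refine mul_le hq hr ?_ ?_
      · rw [hrdef, mul_add, hq0u, hq.2, zero_add]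
      · rw [hrdef, add_mul, huq0, hq.2, zero_add]
    · have hqc : q * c = 0 := horth q hqF he
      have hcq : c * q = 0 := by rw [comm_central hc hq.1, hqc]
      obtain ⟨hqs1, hqs2⟩ := le_mul hq hsp (hs.2.1 q hqF)
      have hqq0 : q * q0 = 0 := by
        rw [← hq0c2, ← mul_assoc, hqc, zero_mul]
      have hq0q : q0 * q = 0 := by
        rw [← hq0c1, mul_assoc, hcq, mul_zero]
      refine mul_le hq hr ?_ ?_
      · rw [hrdef, mul_add, mul_sub, hqs1, ← mul_assoc, hqs1, hqc, hqq0]; abel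
      · rw [hrdef, add_mul, sub_mul, hqs2, mul_assoc, hcq, mul_zero, hq0q]; abel
  have hsr : s ≤ r := hs.2.2 r hr hub
  have h8 : s * r = s := (le_mul hsp hr hsr).1
  have h9 : s * r = r := by
    rw [hrdef, mul_add, mul_sub, hsp.2, ← mul_assoc, hsp.2, hq0s2]
  have h10 : s - s * c + q0 = s := by rw [← hrdef, ← h9, h8]
  calc s * c = s - (s - s * c + q0) + q0 := by abel
    _ = s - s + q0 := by rw [h10]
    _ = q0 := by abel

/-- Lemma C: a subprojection of the supremum with vanishing central slices
is zero. -/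
lemma slice_zero {F : Set R} {p v : R} (hF : ∀ q ∈ F, S.IsProj q)
    (hp : S.IsSupProj F p) (c : R → R)
    (hc : ∀ q ∈ F, S.IsCentralProj (c q) ∧ q ≤ c q)
    (hv : S.IsProj v) (hvp : v ≤ p) (h0 : ∀ q ∈ F, v * c q = 0) : v = 0 := by
  have hpp := hp.1
  obtain ⟨hv1, hv2⟩ := le_mul hv hpp hvp
  have hr : S.IsProj (p - v) := isProj_sub hv hpp hvp
  have hub : ∀ q ∈ F, q ≤ p - v := by
    intro q hqF
    have hq := hF q hqF
    obtain ⟨hq1, hq2⟩ := le_mul hq hpp (hp.2.1 q hqF)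
    obtain ⟨hqc1, hqc2⟩ := le_mul hq (hc q hqF).1.1 (hc q hqF).2
    have hcv : c q * v = 0 := by
      rw [comm_central (hc q hqF).1 hv.1, h0 q hqF]
    have hvq : v * q = 0 := by
      rw [← hqc2, ← mul_assoc, h0 q hqF, zero_mul]
    have hqv : q * v = 0 := by
      rw [← hqc1, mul_assoc, hcv, mul_zero]
    refine mul_le hq hr ?_ ?_
    · rw [mul_sub, hq1, hqv, sub_zero]
    · rw [sub_mul, hq2, hvq, sub_zero]
  have h8 : p * (p - v) = p := (le_mul hpp hr (hp.2.2 _ hr hub)).1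
  have h9 : p * (p - v) = p - v := by rw [mul_sub, hpp.2, hv2]
  have h10 : p - v = p := by rw [← h9, h8]
  calc v = p - (p - v) := by abel
    _ = p - p := by rw [h10]
    _ = 0 := by abel

lemma conj_conj_aux {s a b : R} (h : s * s = 1) :
    s * a * s * (s * b * s) = s * (a * b) * s := by
  have h1 : s * a * s * (s * b * s) = s * a * (s * s) * b * s := by noncomm_ring
  rw [h1, h, mul_one, mul_assoc s a b, ← mul_assoc]

lemma conj_conj {s a : R} (h : s * s = 1) : s * (s * a * s) * s = a := by
  have h1 : s * (s * a * s) * s = s * s * a * (s * s) := by noncomm_ring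
  rw [h1, h, one_mul, mul_one]

lemma conj_proj {s p : R} (hs : S.IsSym s) (hp : S.IsProj p) :
    S.IsProj (s * p * s) :=
  ⟨S.quad_mem hs.1 hp.1, by rw [conj_conj_aux hs.2, hp.2]⟩

lemma conj_le {s p q : R} (hs : S.IsSym s) (hp : S.IsProj p) (hq : S.IsProj q)
    (h : p ≤ q) : s * p * s ≤ s * q * s := by
  obtain ⟨h1, h2⟩ := le_mul hp hq h
  refine mul_le (conj_proj hs hp) (conj_proj hs hq) ?_ ?_
  · rw [conj_conj_aux hs.2, h1]
  · rw [conj_conj_aux hs.2, h2]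

lemma conj_le_iff {s p q : R} (hs : S.IsSym s) (hp : S.IsProj p)
    (hq : S.IsProj q) : s * p * s ≤ s * q * s ↔ p ≤ q := by
  refine ⟨fun h => ?_, conj_le hs hp hq⟩
  have := conj_le hs (conj_proj hs hp) (conj_proj hs hq) h
  rwa [conj_conj hs.2, conj_conj hs.2] at this

/-- `x*c` is the infimum of `x` and `q*c` (for `x ≤ q`, `c` central). -/
lemma inf_slice {x c v : R} (hx : S.IsProj x) (hc : S.IsCentralProj c)
    (hv : S.IsProj v) (hvx : v ≤ x) (hvc : v ≤ c) : v ≤ x * c := by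
  obtain ⟨hv1, hv2⟩ := le_mul hv hx hvx
  obtain ⟨hc1, hc2⟩ := le_mul hv hc.1 hvc
  refine mul_le hv (isProj_mulc hx hc) ?_ ?_
  · rw [← mul_assoc, hv1, hc1]
  · rw [mul_assoc, hc2, hv2]

/-- `x - x*c` is below `q - q*c` when `x ≤ q` and `c` is central. -/
lemma sub_slice_le {x q c : R} (hx : S.IsProj x) (hq : S.IsProj q)
    (hc : S.IsCentralProj c) (hxq : x ≤ q) :
    x - x * c ≤ q - q * c := by
  obtain ⟨h1, h2⟩ := le_mul hx hq hxq
  have hcx := comm_central hc hx.1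
  have hcq := comm_central hc hq.1
  have e1 : x * (q * c) = x * c := by rw [← mul_assoc, h1]
  have e2 : x * c * q = x * c := by
    rw [mul_assoc, hcq, ← mul_assoc, h1]
  have e3 : x * c * (q * c) = x * c := by
    rw [slice_mul hcq hc.1.2, h1]
  have e4 : q * (x * c) = x * c := by rw [← mul_assoc, h2]
  have e5 : q * c * x = x * c := by
    rw [mul_assoc, hcx, ← mul_assoc, h2]
  have e6 : q * c * (x * c) = x * c := by
    rw [slice_mul hcx hc.1.2, h2]
  have hxc : S.IsProj (x * c) := isProj_mulc hx hc
  have hqc : S.IsProj (q * c) := isProj_mulc hq hc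
  refine mul_le (isProj_sub hxc hx (mulc_le_left hx hc))
    (isProj_sub hqc hq (mulc_le_left hq hc)) ?_ ?_
  · have : (x - x * c) * (q - q * c)
        = x * q - x * (q * c) - (x * c * q - x * c * (q * c)) := by noncomm_ring
    rw [this, h1, e1, e2, e3]; abel
  · have : (q - q * c) * (x - x * c)
        = q * x - q * (x * c) - (q * c * x - q * c * (x * c)) := by noncomm_ring
    rw [this, h2, e4, e5, e6]; abel

/-- minimality for `x - x*c`. -/
lemma inf_coslice {x q c v : R} (hx : S.IsProj x) (hq : S.IsProj q)
    (hc : S.IsCentralProj c) (hxq : x ≤ q)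
    (hv : S.IsProj v) (hvx : v ≤ x) (hvq : v ≤ q)
    (hvqc : v ≤ q - q * c) : v ≤ x - x * c := by
  obtain ⟨hv1, hv2⟩ := le_mul hv hx hvx
  obtain ⟨hw1, hw2⟩ := le_mul hv hq hvq
  have hqc : S.IsProj (q * c) := isProj_mulc hq hc
  obtain ⟨hu1, hu2⟩ := le_mul hv (isProj_sub hqc hq (mulc_le_left hq hc)) hvqc
  -- from hu1 : v * (q - q*c) = v, derive v * c = 0
  have hvc : v * c = 0 := by
    have h1 : v * (q - q * c) = v - v * c := by
      rw [mul_sub, hw1, ← mul_assoc, hw1]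
    rw [h1] at hu1
    calc v * c = v - (v - v * c) := by abel
      _ = v - v := by rw [hu1]
      _ = 0 := by abel
  have hcv : c * v = 0 := by rw [comm_central hc hv.1, hvc]
  refine mul_le hv (isProj_sub (isProj_mulc hx hc) hx (mulc_le_left hx hc)) ?_ ?_
  · rw [mul_sub, hv1, ← mul_assoc, hv1, hvc, sub_zero]
  · rw [sub_mul, hv2, mul_assoc, hcv, mul_zero, sub_zero]

/-- `x` is the join of `x*c` and `x - x*c`. -/
lemma sup_slices {x c u : R} (hx : S.IsProj x) (hc : S.IsCentralProj c)
    (hu : S.IsProj u) (h1 : x * c ≤ u) (h2 : x - x * c ≤ u) : x ≤ u := by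
  obtain ⟨ha1, ha2⟩ := le_mul (isProj_mulc hx hc) hu h1
  obtain ⟨hb1, hb2⟩ := le_mul
    (isProj_sub (isProj_mulc hx hc) hx (mulc_le_left hx hc)) hu h2
  refine mul_le hx hu ?_ ?_
  · have : x * u = x * c * u + (x - x * c) * u := by noncomm_ring
    rw [this, ha1, hb1]; abel
  · have : u * x = u * (x * c) + u * (x - x * c) := by noncomm_ring
    rw [this, ha2, hb2]; abel

/-- `p - x` is the infimum of `p` and `q - x` (for `x ≤ p ≤ q`). -/
lemma inf_interval_compl {x p q v : R} (hx : S.IsProj x) (hp : S.IsProj p)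
    (hq : S.IsProj q) (hxp : x ≤ p) (hpq : p ≤ q)
    (hv : S.IsProj v) (hvp : v ≤ p) (hvqx : v ≤ q - x) : v ≤ p - x := by
  obtain ⟨hv1, hv2⟩ := le_mul hv hp hvp
  obtain ⟨hw1, hw2⟩ := le_mul hv hq (le_trans hvp hpq)
  obtain ⟨hu1, hu2⟩ := le_mul hv (isProj_sub hx hq (le_trans hxp hpq)) hvqx
  have hvx : v * x = 0 := by
    have h1 : v * (q - x) = v - v * x := by rw [mul_sub, hw1]
    rw [h1] at hu1
    calc v * x = v - (v - v * x) := by abel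
      _ = 0 := by rw [hu1]; abel
  have hxv : x * v = 0 := by
    have h1 : (q - x) * v = v - x * v := by rw [sub_mul, hw2]
    rw [h1] at hu2
    calc x * v = v - (v - x * v) := by abel
      _ = 0 := by rw [hu2]; abel
  refine mul_le hv (isProj_sub hx hp hxp) ?_ ?_
  · rw [mul_sub, hv1, hvx, sub_zero]
  · rw [sub_mul, hv2, hxv, sub_zero]

/-- `p - x ≤ q - x` for projections `x ≤ p ≤ q`. -/
lemma sub_le_sub_proj {x p q : R} (hx : S.IsProj x) (hp : S.IsProj p)
    (hq : S.IsProj q) (hxp : x ≤ p) (hpq : p ≤ q) : p - x ≤ q - x := by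
  obtain ⟨h1, h2⟩ := le_mul hx hp hxp
  obtain ⟨h3, h4⟩ := le_mul hp hq hpq
  obtain ⟨h5, h6⟩ := le_mul hx hq (le_trans hxp hpq)
  refine mul_le (isProj_sub hx hp hxp) (isProj_sub hx hq (le_trans hxp hpq))
    ?_ ?_
  · have : (p - x) * (q - x) = p * q - p * x - (x * q - x * x) := by
      noncomm_ring
    rw [this, h3, h2, h5, hx.2]; abel
  · have : (q - x) * (p - x) = q * p - q * x - (x * p - x * x) := by
      noncomm_ring
    rw [this, h4, h6, h1, hx.2]; abel

variable {L L' : BOML.{u}}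

lemma rep_relInf {q : R} (f : L.α ≃ {x : R // S.IsProj x ∧ x ≤ q})
    (hf : ∀ a b : L.α, L.le a b ↔ ((f a : R) ≤ (f b : R)))
    {a b m : L.α}
    (h1 : ((f m : R)) ≤ (f a : R)) (h2 : ((f m : R)) ≤ (f b : R))
    (h3 : ∀ v : R, S.IsProj v → v ≤ q → v ≤ (f a : R) → v ≤ (f b : R) →
      v ≤ (f m : R)) :
    L.RelInf a b m :=
  ⟨(hf m a).2 h1, (hf m b).2 h2, fun v hva hvb =>
    (hf v m).2 (h3 (f v) (f v).2.1 (f v).2.2 ((hf v a).1 hva) ((hf v b).1 hvb))⟩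

lemma rep_relSup {q : R} (f : L.α ≃ {x : R // S.IsProj x ∧ x ≤ q})
    (hf : ∀ a b : L.α, L.le a b ↔ ((f a : R) ≤ (f b : R)))
    {a b m : L.α}
    (h1 : ((f a : R)) ≤ (f m : R)) (h2 : ((f b : R)) ≤ (f m : R))
    (h3 : ∀ u : R, S.IsProj u → u ≤ q → (f a : R) ≤ u → (f b : R) ≤ u →
      (f m : R) ≤ u) :
    L.RelSup a b m :=
  ⟨(hf a m).2 h1, (hf b m).2 h2, fun u hau hbu =>
    (hf m u).2 (h3 (f u) (f u).2.1 (f u).2.2 ((hf a u).1 hau) ((hf b u).1 hbu))⟩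

/-- conjugation by a symmetry gives an OML isomorphism of intervals. -/
lemma iso_conj_rep {s p : R} (hs : S.IsSym s) (hp : S.IsProj p)
    (hL : S.RepresentsInterval L (s * p * s)) (hL' : S.RepresentsInterval L' p) :
    BOML.IsoOf L L' := by
  obtain ⟨e, he, hce⟩ := hL
  obtain ⟨f, hf, hcf⟩ := hL'
  have hsps := conj_proj hs hp
  have hto : ∀ x : {x : R // S.IsProj x ∧ x ≤ s * p * s},
      S.IsProj (s * (x : R) * s) ∧ s * (x : R) * s ≤ p := by
    intro x
    refine ⟨conj_proj hs x.2.1, ?_⟩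
    have h := conj_le hs x.2.1 hsps x.2.2
    rwa [conj_conj hs.2] at h
  have hfrom : ∀ y : {x : R // S.IsProj x ∧ x ≤ p},
      S.IsProj (s * (y : R) * s) ∧ s * (y : R) * s ≤ s * p * s :=
    fun y => ⟨conj_proj hs y.2.1, conj_le hs y.2.1 hp y.2.2⟩
  refine ⟨e.trans ((Equiv.mk
      (fun x : {x : R // S.IsProj x ∧ x ≤ s * p * s} =>
        (⟨s * (x : R) * s, hto x⟩ : {x : R // S.IsProj x ∧ x ≤ p}))
      (fun y : {x : R // S.IsProj x ∧ x ≤ p} =>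
        (⟨s * (y : R) * s, hfrom y⟩ : {x : R // S.IsProj x ∧ x ≤ s * p * s}))
      (fun x => Subtype.ext (conj_conj hs.2))
      (fun y => Subtype.ext (conj_conj hs.2))).trans f.symm), ?_, ?_⟩
  · intro a b
    rw [he a b, hf]
    simp only [Equiv.trans_apply, Equiv.apply_symm_apply, Equiv.coe_fn_mk]
    exact (conj_le_iff hs (e a).2.1 (e b).2.1).symm
  · intro a
    apply f.injective
    apply Subtype.ext
    rw [hcf]
    simp only [Equiv.trans_apply, Equiv.apply_symm_apply, Equiv.coe_fn_mk]
    rw [hce a]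
    have h1 : s * (s * p * s - (e a : R)) * s
        = s * (s * p * s) * s - s * (e a : R) * s := by noncomm_ring
    rw [h1, conj_conj hs.2]

/-- For projections `p ≤ q`, `L` (representing `P[0,p]`) is an interval
of `L'` (representing `P[0,q]`). -/
lemma interval_rep {p q : R} (hp : S.IsProj p) (hq : S.IsProj q) (hpq : p ≤ q)
    (hL : S.RepresentsInterval L p)
    (f : L'.α ≃ {x : R // S.IsProj x ∧ x ≤ q})
    (hf : ∀ a b : L'.α, L'.le a b ↔ ((f a : R) ≤ (f b : R)))
    (hcf : ∀ a : L'.α, ((f (L'.compl a)) : R) = q - ((f a) : R)) :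
    BOML.IsIntervalOf L L' (f.symm ⟨p, hp, hpq⟩) := by
  obtain ⟨e, he, hce⟩ := hL
  have hle_c : ∀ a : L'.α, L'.le a (f.symm ⟨p, hp, hpq⟩) ↔ ((f a : R) ≤ p) := by
    intro a; rw [hf]; rw [Equiv.apply_symm_apply]
  refine ⟨⟨fun x => ⟨f.symm ⟨(e x : R), (e x).2.1, le_trans (e x).2.2 hpq⟩,
      (hle_c _).2 (by rw [Equiv.apply_symm_apply]; exact (e x).2.2)⟩,
    fun a => e.symm ⟨(f a.1 : R), (f a.1).2.1, (hle_c a.1).1 a.2⟩,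
    fun x => ?_, fun a => ?_⟩, ?_, ?_⟩
  · simp only [Equiv.apply_symm_apply]
    rw [Equiv.symm_apply_eq]
  · apply Subtype.ext
    simp only [Equiv.apply_symm_apply]
    rw [Equiv.symm_apply_eq]
  · intro a b
    rw [he a b, hf]
    simp only [Equiv.coe_fn_mk, Equiv.apply_symm_apply]
  · intro a
    refine rep_relInf f hf ?_ ?_ ?_
    · simp only [Equiv.coe_fn_mk, Equiv.apply_symm_apply]
      rw [hce a]
      exact sub_le_self (e a).2.1 hp (e a).2.2
    · rw [hcf]
      simp only [Equiv.coe_fn_mk, Equiv.apply_symm_apply]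
      rw [hce a]
      exact sub_le_sub_proj (e a).2.1 hp hq (e a).2.2 hpq
    · intro v hv hvq hva hvb
      rw [hcf] at hvb
      simp only [Equiv.coe_fn_mk, Equiv.apply_symm_apply] at hva hvb ⊢
      rw [hce a]
      exact inf_interval_compl (e a).2.1 hp hq (e a).2.2 hpq hv hva hvb

/-- For a central projection `c`, the element corresponding to `q*c` is
central in the interval OML `P[0,q]`. -/
lemma central_el_rep {q c : R} (hq : S.IsProj q) (hc : S.IsCentralProj c)
    (f : L'.α ≃ {x : R // S.IsProj x ∧ x ≤ q})
    (hf : ∀ a b : L'.α, L'.le a b ↔ ((f a : R) ≤ (f b : R)))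
    (hcf : ∀ a : L'.α, ((f (L'.compl a)) : R) = q - ((f a) : R)) :
    BOML.IsCentralEl L'
      (f.symm ⟨q * c, isProj_mulc hq hc, mulc_le_left hq hc⟩) := by
  intro a
  have hx : S.IsProj ((f a : R)) := (f a).2.1
  have hxq : ((f a : R)) ≤ q := (f a).2.2
  have hxc : S.IsProj ((f a : R) * c) := isProj_mulc hx hc
  have hxcle : (f a : R) * c ≤ (f a : R) := mulc_le_left hx hc
  refine ⟨f.symm ⟨(f a : R) * c, hxc, le_trans hxcle hxq⟩,
    f.symm ⟨(f a : R) - (f a : R) * c, isProj_sub hxc hx hxcle,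
      le_trans (sub_le_self hxc hx hxcle) hxq⟩, ?_, ?_, ?_⟩
  · refine rep_relInf f hf ?_ ?_ ?_
    · simp only [Equiv.apply_symm_apply]
      exact hxcle
    · simp only [Equiv.apply_symm_apply]
      exact le_mulc hx hq hc hxq
    · intro v hv hvq h1 h2
      simp only [Equiv.apply_symm_apply] at h1 h2 ⊢
      exact inf_slice hx hc hv h1 (le_trans h2 (mulc_le_central hq hc))
  · refine rep_relInf f hf ?_ ?_ ?_
    · simp only [Equiv.apply_symm_apply]
      exact sub_le_self hxc hx hxcle
    · rw [hcf]
      simp only [Equiv.apply_symm_apply]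
      exact sub_slice_le hx hq hc hxq
    · intro v hv hvq h1 h2
      rw [hcf] at h2
      simp only [Equiv.apply_symm_apply] at h1 h2 ⊢
      exact inf_coslice hx hq hc hxq hv h1 (le_trans h1 hxq) h2
  · refine rep_relSup f hf ?_ ?_ ?_
    · simp only [Equiv.apply_symm_apply]
      exact hxcle
    · simp only [Equiv.apply_symm_apply]
      exact sub_le_self hxc hx hxcle
    · intro u hu huq h1 h2
      simp only [Equiv.apply_symm_apply] at h1 h2 ⊢
      exact sup_slices hx hc hu h1 h2

/-- Existence of the supremum of a family dominated by the pairwise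
orthogonal central family, together with its central slices. -/
lemma sup_of_slices (hco : S.CentOrthocomplete) {F : Set R} (c : R → R)
    (hc : ∀ q ∈ F, S.IsCentralProj (c q))
    (horth : ∀ q ∈ F, ∀ q' ∈ F, q ≠ q' → c q * c q' = 0)
    (y : ↥F → R) (hy1 : ∀ i : ↥F, S.IsProj (y i))
    (hy2 : ∀ i : ↥F, y i ≤ c i.val) :
    ∃ s : R, S.IsSupProj {z : R | ∃ i : ↥F, z = y i} s ∧
      ∀ i : ↥F, s * c i.val = y i := by
  classical
  have hycross : ∀ i j : ↥F, (i : R) ≠ (j : R) → y i * c j.val = 0 := by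
    intro i j hne
    have h1 : y i * c i.val = y i := (le_mul (hy1 i) (hc _ i.2).1 (hy2 i)).1
    rw [← h1, mul_assoc, horth _ i.2 _ j.2 hne, mul_zero]
  have hcov1 : ∀ (z : R) (hz : ∃ i : ↥F, z = y i),
      (fun z => if h : ∃ i : ↥F, z = y i then c h.choose.val else 0) z
        = c hz.choose.val := by
    intro z hz
    show (if h : ∃ i : ↥F, z = y i then c h.choose.val else 0)
      = c hz.choose.val
    exact dif_pos hz
  have hset : S.CentOrthSet {z : R | ∃ i : ↥F, z = y i} := by
    refine ⟨fun z hz => ?_,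
      fun z => if h : ∃ i : ↥F, z = y i then c h.choose.val else 0, ?_, ?_⟩
    · obtain ⟨i, rfl⟩ := hz; exact hy1 i
    · intro z hz
      have hz2 : ∃ i : ↥F, z = y i := hz
      rw [hcov1 z hz2]
      refine ⟨hc _ hz2.choose.2, ?_⟩
      conv_lhs => rw [hz2.choose_spec]
      exact hy2 _
    · intro z hz z' hz' hne
      have hz2 : ∃ i : ↥F, z = y i := hz
      have hz2' : ∃ i : ↥F, z' = y i := hz'
      rw [hcov1 z hz2, hcov1 z' hz2']
      refine horth _ hz2.choose.2 _ hz2'.choose.2 fun he => hne ?_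
      rw [hz2.choose_spec, hz2'.choose_spec, Subtype.ext he]
  obtain ⟨s, hs⟩ := hco _ hset
  refine ⟨s, hs, fun j => ?_⟩
  refine sup_slice hs ⟨j, rfl⟩ (hy1 j) (hc _ j.2) (hy2 j)
    (fun z hz => hz.elim fun i hi => hi ▸ hy1 i) ?_
  rintro z ⟨i, rfl⟩ hne
  exact hycross i j fun he => hne (by rw [Subtype.ext he])

/-- the OML `P[0,p]`, for `p` the supremum of a centrally orthogonal family,
is the product of the interval OMLs of the members. -/
lemma product_rep (hco : S.CentOrthocomplete) {F : Set R} {p : R}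
    (hF : ∀ q ∈ F, S.IsProj q) (c : R → R)
    (hc : ∀ q ∈ F, S.IsCentralProj (c q) ∧ q ≤ c q)
    (horth : ∀ q ∈ F, ∀ q' ∈ F, q ≠ q' → c q * c q' = 0)
    (hp : S.IsSupProj F p)
    {Lp : BOML.{u}} (hLp : S.RepresentsInterval Lp p)
    (PI : ↥F → BOML.{u}) (hPI : ∀ i : ↥F, S.RepresentsInterval (PI i) i.val) :
    BOML.IsProductOf Lp PI := by
  classical
  obtain ⟨f, hf, hcf⟩ := hLp
  choose g hg hcg using hPI
  have hpp := hp.1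
  have hFc : ∀ i : ↥F, S.IsCentralProj (c i.val) := fun i => (hc _ i.2).1
  have hic : ∀ i : ↥F, (i : R) ≤ c i.val := fun i => (hc _ i.2).2
  have hiP : ∀ i : ↥F, S.IsProj (i : R) := fun i => hF _ i.2
  have hcross : ∀ q ∈ F, ∀ i : ↥F, q ≠ (i : R) → q * c i.val = 0 := by
    intro q hq i hne
    have h1 : q * c q = q := (le_mul (hF q hq) (hc q hq).1.1 (hc q hq).2).1
    rw [← h1, mul_assoc, horth q hq i.val i.2 hne, mul_zero]
  have hslice : ∀ i : ↥F, p * c i.val = i.val := fun i =>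
    sup_slice hp i.2 (hiP i) (hFc i) (hic i) hF
      (fun q hq hne => hcross q hq i hne)
  have hxi : ∀ x : R, S.IsProj x → x ≤ p → ∀ i : ↥F,
      S.IsProj (x * c i.val) ∧ x * c i.val ≤ (i : R) := by
    intro x hx hxp i
    refine ⟨isProj_mulc hx (hFc i), ?_⟩
    have h := le_mulc hx hpp (hFc i) hxp
    rwa [hslice i] at h
  -- every projection below p is the supremum of its central slices
  have key : ∀ x : R, S.IsProj x → x ≤ p →
      S.IsSupProj {z : R | ∃ i : ↥F, z = x * c i.val} x := by
    intro x hx hxp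
    obtain ⟨s, hs, hsl⟩ := sup_of_slices hco c (fun q hq => (hc q hq).1) horth
      (fun i => x * c i.val) (fun i => (hxi x hx hxp i).1)
      (fun i => mulc_le_central hx (hFc i))
    have hsx : s ≤ x := by
      refine hs.2.2 x hx ?_
      rintro z ⟨i, rfl⟩
      exact mulc_le_left hx (hFc i)
    have hv : S.IsProj (x - s) := isProj_sub hs.1 hx hsx
    have hvz : x - s = 0 := by
      refine slice_zero hF hp c hc hv
        (le_trans (sub_le_self hs.1 hx hsx) hxp) ?_
      intro q hq
      have := hsl ⟨q, hq⟩
      rw [sub_mul, this, sub_self]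
    have hxs : x = s := by
      have := sub_eq_zero.1 hvz
      exact this
    rwa [← hxs] at hs
  -- the product map
  refine ⟨Equiv.ofBijective
    (fun a => fun i => (g i).symm ⟨(f a : R) * c i.val,
      (hxi _ (f a).2.1 (f a).2.2 i).1, (hxi _ (f a).2.1 (f a).2.2 i).2⟩)
    ⟨?_, ?_⟩, ?_, ?_⟩
  · -- injective
    intro a b hab
    apply f.injective
    apply Subtype.ext
    have heq : ∀ i : ↥F, (f a : R) * c i.val = (f b : R) * c i.val := by
      intro i
      have h1 := congrFun hab i
      have h2 := (g i).symm.injective h1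
      exact congrArg Subtype.val h2
    have h1 : (f a : R) ≤ (f b : R) := by
      refine (key _ (f a).2.1 (f a).2.2).2.2 _ (f b).2.1 ?_
      rintro z ⟨i, rfl⟩
      rw [heq i]
      exact mulc_le_left (f b).2.1 (hFc i)
    have h2 : (f b : R) ≤ (f a : R) := by
      refine (key _ (f b).2.1 (f b).2.2).2.2 _ (f a).2.1 ?_
      rintro z ⟨i, rfl⟩
      rw [← heq i]
      exact mulc_le_left (f a).2.1 (hFc i)
    exact le_antisymm h1 h2
  · -- surjective
    intro h
    obtain ⟨s, hs, hsl⟩ := sup_of_slices hco c (fun q hq => (hc q hq).1) horth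
      (fun i => ((g i (h i)) : R)) (fun i => (g i (h i)).2.1)
      (fun i => le_trans (g i (h i)).2.2 (hic i))
    have hsp : s ≤ p := by
      refine hs.2.2 p hpp ?_
      rintro z ⟨i, rfl⟩
      exact le_trans (g i (h i)).2.2 (hp.2.1 _ i.2)
    refine ⟨f.symm ⟨s, hs.1, hsp⟩, ?_⟩
    funext i
    simp only [Equiv.apply_symm_apply]
    rw [Equiv.symm_apply_eq]
    exact Subtype.ext (hsl i)
  · -- order
    intro a b
    rw [hf]
    constructor
    · intro hab i
      rw [hg i]
      show (((g i) ((g i).symm ⟨(f a : R) * c i.val, _⟩) : R)) ≤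
        (((g i) ((g i).symm ⟨(f b : R) * c i.val, _⟩) : R))
      simp only [Equiv.apply_symm_apply]
      exact le_mulc (f a).2.1 (f b).2.1 (hFc i) hab
    · intro hall
      refine (key _ (f a).2.1 (f a).2.2).2.2 _ (f b).2.1 ?_
      rintro z ⟨i, rfl⟩
      have h1 := (hg i _ _).1 (hall i)
      change (((g i) ((g i).symm ⟨(f a : R) * c i.val, _⟩) : R)) ≤
        (((g i) ((g i).symm ⟨(f b : R) * c i.val, _⟩) : R)) at h1
      simp only [Equiv.apply_symm_apply] at h1
      exact le_trans h1 (mulc_le_left (f b).2.1 (hFc i))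
  · -- complement
    intro a i
    apply (g i).injective
    apply Subtype.ext
    rw [hcg i]
    show (((g i) ((g i).symm ⟨(f (Lp.compl a) : R) * c i.val, _⟩) : R)) =
      i.val - (((g i) ((g i).symm ⟨(f a : R) * c i.val, _⟩) : R))
    simp only [Equiv.apply_symm_apply]
    rw [hcf a, sub_mul, hslice i]

end Synaptic

end Aux

/-- If `𝒬` is an OML type class (closed under central intervals, arbitrary
cartesian products, and OML isomorphism), then
`Q := {q ∈ P : P[0,q] ∈ 𝒬}` is a projective TD subset of `P`; if moreover `𝒬`
is a strong OML type class (closed under all intervals), then `Q` is STD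
(i.e. also downward closed). -/
theorem typeClass_gives_projective_TD {R : Type u} [Ring R] [PartialOrder R]
    (S : Synaptic R) (hco : S.CentOrthocomplete)
    (𝒬 : BOML.{u} → Prop)
    (hCentral : ∀ L, 𝒬 L → ∀ c : L.α, BOML.IsCentralEl L c →
      ∀ L', BOML.IsIntervalOf L' L c → 𝒬 L')
    (hProd : ∀ (ι : Type u) (f : ι → BOML.{u}) (L : BOML.{u}),
      BOML.IsProductOf L f → (∀ i, 𝒬 (f i)) → 𝒬 L)
    (hIso : ∀ L L', BOML.IsoOf L L' → 𝒬 L → 𝒬 L')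
    (PInt : R → BOML.{u})
    (hPInt : ∀ q : R, S.IsProj q → S.RepresentsInterval (PInt q) q) :
    (S.TD {q : R | S.IsProj q ∧ 𝒬 (PInt q)} ∧
      S.Projective {q : R | S.IsProj q ∧ 𝒬 (PInt q)}) ∧
    ((∀ L, 𝒬 L → ∀ (p : L.α) (L'), BOML.IsIntervalOf L' L p → 𝒬 L') →
      S.DownwardClosed {q : R | S.IsProj q ∧ 𝒬 (PInt q)}) := by
  classical
  constructor
  · constructor
    · -- TD
      refine ⟨fun q hq => hq.1, ?_, ?_⟩
      · -- closure under suprema of centrally orthogonal families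
        intro F hFQ hcent p hsp
        obtain ⟨hFproj, c, hc, horth⟩ := hcent
        refine ⟨hsp.1, ?_⟩
        exact hProd (↥F) (fun i => PInt i.val) (PInt p)
          (Synaptic.product_rep hco hFproj c hc horth hsp (hPInt p hsp.1)
            (fun i => PInt i.val) (fun i => hPInt i.val (hFproj _ i.2)))
          (fun i => (hFQ i.2).2)
      · -- closure under meets with central projections
        intro q hq c hc
        obtain ⟨f, hf, hcf⟩ := hPInt q hq.1
        have hqc : S.IsProj (q * c) := Synaptic.isProj_mulc hq.1 hc
        refine ⟨hqc, ?_⟩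
        exact hCentral (PInt q) hq.2 _ (Synaptic.central_el_rep hq.1 hc f hf hcf)
          (PInt (q * c))
          (Synaptic.interval_rep hqc hq.1 (Synaptic.mulc_le_left hq.1 hc)
            (hPInt _ hqc) f hf hcf)
    · -- projectivity
      intro p q hq hpq
      obtain ⟨n, e, h0, hn, hproj, hstep⟩ := hpq
      have claim : ∀ k, k ≤ n → S.IsProj (e (n - k)) ∧ 𝒬 (PInt (e (n - k))) := by
        intro k
        induction k with
        | zero =>
          intro _
          rw [Nat.sub_zero, hn]
          exact hq
        | succ k ih =>
          intro hk1
          have ihh := ih (Nat.le_of_succ_le hk1)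
          obtain ⟨s, hs, hse⟩ := hstep (n - (k + 1)) (by omega)
          have heq : n - (k + 1) + 1 = n - k := by omega
          rw [heq] at hse
          have hproj' : S.IsProj (e (n - (k + 1))) := hproj _ (by omega)
          refine ⟨hproj', ?_⟩
          have hrep : S.RepresentsInterval (PInt (e (n - k)))
              (s * e (n - (k + 1)) * s) := by
            rw [hse]; exact hPInt _ (hproj _ (by omega))
          exact hIso _ _
            (Synaptic.iso_conj_rep hs hproj' hrep (hPInt _ hproj')) ihh.2
      have hfin := claim n le_rfl
      rw [Nat.sub_self, h0] at hfin
      exact hfin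
  · -- downward closedness under the strong hypothesis
    intro hStrong q hqQ p hp hple
    obtain ⟨f, hf, hcf⟩ := hPInt q hqQ.1
    exact ⟨hp, hStrong (PInt q) hqQ.2 _ (PInt p)
      (Synaptic.interval_rep hp hqQ.1 hple (hPInt p hp) f hf hcf)⟩
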